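/- The matrix g₇ = (1/2)[[-1,1,α],[-ᾱ,-ᾱ,0],[1,-1,α]], with α = (1+i√7)/2, has order exactly 7 in GL(3,C). -/
import Mathlib


noncomputable section

def Kalpha : ℂ := (1 + Complex.I * Real.sqrt 7) / 2
def Kalphabar : ℂ := (1 - Complex.I * Real.sqrt 7) / 2

def g7 : Matrix (Fin 3) (Fin 3) ℂ :=
  (1/2 : ℂ) • !![-1,1,Kalpha; -Kalphabar,-Kalphabar,0; 1,-1,Kalpha]

lemma hc7 : ((Real.sqrt 7 : ℝ) : ℂ)^2 = 7 := by
  rw [← Complex.ofReal_pow, Real.sq_sqrt (by norm_num : (0:ℝ) ≤ 7)]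
  norm_num

lemma ha : Kalpha^2 - Kalpha + 2 = 0 := by
  unfold Kalpha
  linear_combination (((Real.sqrt 7 : ℝ) : ℂ)^2/4) * Complex.I_sq - (1/4) * hc7

lemma hb : Kalphabar = 1 - Kalpha := by
  unfold Kalpha Kalphabar; ring

lemma hg : g7 = !![(-1/2 : ℂ), 1/2, Kalpha/2;
                   (Kalpha-1)/2, (Kalpha-1)/2, 0;
                   1/2, -1/2, Kalpha/2] := by
  rw [g7, hb]
  ext i j
  fin_cases i <;> fin_cases j <;> simp <;> ring

lemma e2 : g7 ^ 2 = !![(1/2 : ℂ)*Kalpha, -1/2, -1/2;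
                       (-1/2)*Kalpha, -1/2, -1/2;
                       0, 1/2 + (-1/2)*Kalpha, -1/2 + (1/2)*Kalpha] := by
  rw [sq, hg, Matrix.mul_fin_three]
  refine congrArg Matrix.of (Matrix.vec3_eq (Matrix.vec3_eq ?_ ?_ ?_)
    (Matrix.vec3_eq ?_ ?_ ?_) (Matrix.vec3_eq ?_ ?_ ?_))
  · linear_combination (0 : ℂ) * ha
  · linear_combination (0 : ℂ) * ha
  · linear_combination (1/4 : ℂ) * ha
  · linear_combination (1/4 : ℂ) * ha
  · linear_combination (1/4 : ℂ) * ha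
  · linear_combination (1/4 : ℂ) * ha
  · linear_combination (0 : ℂ) * ha
  · linear_combination (0 : ℂ) * ha
  · linear_combination (1/4 : ℂ) * ha

lemma e4 : g7 ^ 4 = !![(-1/2 : ℂ) + (1/2)*Kalpha, 0, 1/2 + (-1/2)*Kalpha;
                       1/2, (1/2)*Kalpha, 1/2;
                       -1/2, (1/2)*Kalpha, -1/2] := by
  rw [show (4:ℕ) = 2*2 from rfl, pow_mul, e2, sq, Matrix.mul_fin_three]
  refine congrArg Matrix.of (Matrix.vec3_eq (Matrix.vec3_eq ?_ ?_ ?_)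
    (Matrix.vec3_eq ?_ ?_ ?_) (Matrix.vec3_eq ?_ ?_ ?_))
  · linear_combination (1/4 : ℂ) * ha
  · linear_combination (0 : ℂ) * ha
  · linear_combination (0 : ℂ) * ha
  · linear_combination (-1/4 : ℂ) * ha
  · linear_combination (0 : ℂ) * ha
  · linear_combination (0 : ℂ) * ha
  · linear_combination (1/4 : ℂ) * ha
  · linear_combination (-1/4 : ℂ) * ha
  · linear_combination (1/4 : ℂ) * ha

lemma e6 : g7 ^ 6 = !![(-1/2 : ℂ), (-1/2)*Kalpha, 1/2;
                       1/2, (-1/2)*Kalpha, -1/2;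
                       1/2 + (-1/2)*Kalpha, 0, 1/2 + (-1/2)*Kalpha] := by
  rw [show (6:ℕ) = 4+2 from rfl, pow_add, e4, e2, Matrix.mul_fin_three]
  refine congrArg Matrix.of (Matrix.vec3_eq (Matrix.vec3_eq ?_ ?_ ?_)
    (Matrix.vec3_eq ?_ ?_ ?_) (Matrix.vec3_eq ?_ ?_ ?_))
  · linear_combination (1/4 : ℂ) * ha
  · linear_combination (1/4 : ℂ) * ha
  · linear_combination (-1/4 : ℂ) * ha
  · linear_combination (-1/4 : ℂ) * ha
  · linear_combination (0 : ℂ) * ha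
  · linear_combination (0 : ℂ) * ha
  · linear_combination (-1/4 : ℂ) * ha
  · linear_combination (0 : ℂ) * ha
  · linear_combination (0 : ℂ) * ha

lemma g7_pow7 : g7 ^ 7 = 1 := by
  rw [show (7:ℕ) = 6+1 from rfl, pow_add, e6, pow_one, hg, Matrix.mul_fin_three,
    Matrix.one_fin_three]
  refine congrArg Matrix.of (Matrix.vec3_eq (Matrix.vec3_eq ?_ ?_ ?_)
    (Matrix.vec3_eq ?_ ?_ ?_) (Matrix.vec3_eq ?_ ?_ ?_))
  · linear_combination (-1/4 : ℂ) * ha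
  · linear_combination (-1/4 : ℂ) * ha
  · linear_combination (0 : ℂ) * ha
  · linear_combination (-1/4 : ℂ) * ha
  · linear_combination (-1/4 : ℂ) * ha
  · linear_combination (0 : ℂ) * ha
  · linear_combination (0 : ℂ) * ha
  · linear_combination (0 : ℂ) * ha
  · linear_combination (-1/2 : ℂ) * ha

/-- The matrix `g₇` has order exactly `7`. -/
theorem g7_order_seven : orderOf g7 = 7 := by
  haveI : Fact (Nat.Prime 7) := ⟨by norm_num⟩
  refine orderOf_eq_prime g7_pow7 ?_
  intro h
  have h00 := congr_fun (congr_fun h 0) 0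
  rw [hg] at h00
  simp [Matrix.one_apply] at h00
  norm_num at h00

end
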